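/- Let M ≥ 2 be an integer, θ a real number, and let (U_j)_{j∈S}, (V_j)_{j∈S} be finite families of 2×2 complex matrices with U_j·J = J·U_j and V_j·J = −J·V_j for all j. Then the discretely symmetrized, filtered density operator simplifies as follows: (1/M) · ∑_{j∈S} ∑_{l=0}^{M-1} (I₂ ⊗ (F₀·R_{−lπ/M}·(U_j+V_j)·R_{lπ/M})) · ψ₀ψ₀* · (I₂ ⊗ (F₀·R_{−lπ/M}·(U_j+V_j)·R_{lπ/M}))* = (I₂ ⊗ F₀) · [ ∑_{j∈S} (I₂⊗U_j)·ψ₀ψ₀*·(I₂⊗U_j)* + (I₂⊗V_j)·Φ·(I₂⊗V_j)* ] · (I₂ ⊗ F₀)*, where Φ := (1/M)·∑_{l=0}^{M-1} (I₂ ⊗ R_{2πl/M}) · ψ₀ψ₀* · (I₂ ⊗ R_{2πl/M})*. -/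

import Mathlib

open Matrix Kronecker

/-- The rotation matrix through angle `β`, as a 2×2 complex matrix. -/
noncomputable def R (β : ℝ) : Matrix (Fin 2) (Fin 2) ℂ :=
  !![(Real.cos β : ℂ), -(Real.sin β : ℂ); (Real.sin β : ℂ), (Real.cos β : ℂ)]

/-- The matrix `J = [[0,-1],[1,0]]`, the generator of rotations. -/
def J : Matrix (Fin 2) (Fin 2) ℂ := !![0, -1; 1, 0]

/-- Kronecker (tensor) product of two vectors in ℂ². -/
def vecKron (u v : Fin 2 → ℂ) : Fin 2 × Fin 2 → ℂ := fun p => u p.1 * v p.2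

/-- The state `φ₊(θ) = (cos(θ/2), sin(θ/2))` in ℂ². -/
noncomputable def phiP (θ : ℝ) : Fin 2 → ℂ :=
  ![(Real.cos (θ / 2) : ℂ), (Real.sin (θ / 2) : ℂ)]

/-- The state `φ₋(θ) = (cos(θ/2), -sin(θ/2))` in ℂ². -/
noncomputable def phiM (θ : ℝ) : Fin 2 → ℂ :=
  ![(Real.cos (θ / 2) : ℂ), -(Real.sin (θ / 2) : ℂ)]

/-- The joint state `ψ₀ = (1/√2)(e₀ ⊗ φ₊(θ) + e₁ ⊗ φ₋(θ))` in ℂ⁴. -/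
noncomputable def psi0 (θ : ℝ) : Fin 2 × Fin 2 → ℂ :=
  ((Real.sqrt 2 : ℂ))⁻¹ • (vecKron ![1, 0] (phiP θ) + vecKron ![0, 1] (phiM θ))

/-- The rank-one projector `ψ₀ψ₀*` as a 4×4 matrix. -/
noncomputable def P0 (θ : ℝ) : Matrix (Fin 2 × Fin 2) (Fin 2 × Fin 2) ℂ :=
  Matrix.vecMulVec (psi0 θ) (star (psi0 θ))

/-- The filtration operator `F₀ = diag(sin(θ/2), cos(θ/2))`. -/
noncomputable def F0 (θ : ℝ) : Matrix (Fin 2) (Fin 2) ℂ :=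
  !![(Real.sin (θ / 2) : ℂ), 0; 0, (Real.cos (θ / 2) : ℂ)]

/-- The discretely averaged state
`Φ = (1/M) ∑_{l<M} (I₂ ⊗ R_{2πl/M}) ψ₀ψ₀* (I₂ ⊗ R_{2πl/M})*`. -/
noncomputable def Phi (θ : ℝ) (M : ℕ) : Matrix (Fin 2 × Fin 2) (Fin 2 × Fin 2) ℂ :=
  (1 / (M : ℂ)) • ∑ l ∈ Finset.range M,
    ((1 : Matrix (Fin 2) (Fin 2) ℂ) ⊗ₖ R (2 * Real.pi * (l : ℝ) / (M : ℝ))) * P0 θ *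
      ((1 : Matrix (Fin 2) (Fin 2) ℂ) ⊗ₖ R (2 * Real.pi * (l : ℝ) / (M : ℝ)))ᴴ

/-! ### Auxiliary lemmas -/

lemma R_eq (β : ℝ) : R β = (Real.cos β : ℂ) • 1 + (Real.sin β : ℂ) • _root_.J := by
  ext i j; fin_cases i <;> fin_cases j <;> simp [R, _root_.J, Matrix.one_apply]

lemma R_mul_R (β γ : ℝ) : R β * R γ = R (β + γ) := by
  ext i j
  fin_cases i <;> fin_cases j <;>
    simp [R, Matrix.mul_apply, Fin.sum_univ_two, Real.cos_add, Real.sin_add] <;> ring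

lemma R_zero : R 0 = 1 := by
  ext i j; fin_cases i <;> fin_cases j <;> simp [R, Matrix.one_apply]

lemma R_conjT (β : ℝ) : (R β)ᴴ = R (-β) := by
  ext i j
  fin_cases i <;> fin_cases j <;>
    simp [R, Matrix.conjTranspose_apply, ← Complex.ofReal_sin, ← Complex.ofReal_cos,
      Complex.conj_ofReal]

lemma K_conjT (X : Matrix (Fin 2) (Fin 2) ℂ) :
    ((1 : Matrix (Fin 2) (Fin 2) ℂ) ⊗ₖ X)ᴴ = (1 : Matrix (Fin 2) (Fin 2) ℂ) ⊗ₖ Xᴴ := by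
  ext p q
  by_cases h : p.1 = q.1
  · simp [Matrix.conjTranspose_apply, Matrix.kroneckerMap_apply, Matrix.one_apply, h]
  · simp [Matrix.conjTranspose_apply, Matrix.kroneckerMap_apply, Matrix.one_apply, h, Ne.symm h]

lemma K_mul (X Y : Matrix (Fin 2) (Fin 2) ℂ) :
    ((1 : Matrix (Fin 2) (Fin 2) ℂ) ⊗ₖ X) * ((1 : Matrix (Fin 2) (Fin 2) ℂ) ⊗ₖ Y)
      = (1 : Matrix (Fin 2) (Fin 2) ℂ) ⊗ₖ (X * Y) := by
  rw [← Matrix.mul_kronecker_mul, one_mul]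

lemma K_sum {s : Finset ℕ} (f : ℕ → Matrix (Fin 2) (Fin 2) ℂ) :
    ∑ l ∈ s, ((1 : Matrix (Fin 2) (Fin 2) ℂ) ⊗ₖ f l)
      = (1 : Matrix (Fin 2) (Fin 2) ℂ) ⊗ₖ (∑ l ∈ s, f l) := by
  ext p q
  simp [Matrix.kroneckerMap_apply, Finset.mul_sum, Matrix.sum_apply]

lemma commute_R {U : Matrix (Fin 2) (Fin 2) ℂ} (hU : U * _root_.J = _root_.J * U) (β : ℝ) :
    U * R β = R β * U := by
  rw [R_eq]
  simp only [Matrix.mul_add, Matrix.add_mul, Matrix.mul_smul, Matrix.smul_mul,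
    Matrix.mul_one, Matrix.one_mul, hU]

lemma anticommute_R {V : Matrix (Fin 2) (Fin 2) ℂ} (hV : V * _root_.J = -(_root_.J * V)) (β : ℝ) :
    V * R β = R (-β) * V := by
  rw [R_eq, R_eq]
  simp only [Matrix.mul_add, Matrix.add_mul, Matrix.mul_smul, Matrix.smul_mul,
    Matrix.mul_one, Matrix.one_mul, hV, Real.cos_neg, Real.sin_neg]
  push_cast
  rw [neg_smul, smul_neg]

lemma exp_sum_zero {M : ℕ} (hM : 2 ≤ M) :
    ∑ l ∈ Finset.range M, Complex.exp (2 * Real.pi * l / M * Complex.I) = 0 := by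
  have hM0 : (M : ℝ) ≠ 0 := Nat.cast_ne_zero.mpr (by omega)
  have hx : ∀ l : ℕ, Complex.exp (2 * Real.pi * l / M * Complex.I)
      = (Complex.exp (2 * Real.pi / M * Complex.I)) ^ l := by
    intro l
    rw [← Complex.exp_nat_mul]
    ring_nf
  simp_rw [hx]
  have hne : Complex.exp (2 * Real.pi / M * Complex.I) ≠ 1 := by
    intro h
    rw [Complex.exp_eq_one_iff] at h
    obtain ⟨n, hn⟩ := h
    have hn' : ((2 * Real.pi / M : ℝ) : ℂ) * Complex.I
        = ((n * (2 * Real.pi) : ℝ) : ℂ) * Complex.I := by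
      push_cast at hn ⊢
      linear_combination hn
    have h2 : (2 * Real.pi / M : ℝ) = n * (2 * Real.pi) := by
      exact_mod_cast mul_right_cancel₀ Complex.I_ne_zero hn'
    have h2pi : (2 * Real.pi : ℝ) ≠ 0 := by positivity
    field_simp at h2
    have h1 : (1:ℝ) = n * M := mul_left_cancel₀ h2pi (by linear_combination (2 * Real.pi) * h2)
    have hM2 : (2:ℝ) ≤ M := by exact_mod_cast hM
    have hcase : (1:ℝ) ≤ n ∨ (n:ℝ) ≤ 0 := by exact_mod_cast (by omega : 1 ≤ n ∨ n ≤ 0)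
    rcases hcase with h | h
    · nlinarith
    · nlinarith
  rw [geom_sum_eq hne]
  have hpow : Complex.exp (2 * Real.pi / M * Complex.I) ^ M = 1 := by
    rw [← Complex.exp_nat_mul]
    have : (M : ℂ) * (2 * Real.pi / M * Complex.I) = 2 * Real.pi * Complex.I := by
      have : (M : ℂ) ≠ 0 := by exact_mod_cast hM0
      field_simp
    rw [this, Complex.exp_two_pi_mul_I]
  rw [hpow, sub_self, zero_div]

lemma cos_sin_sum {M : ℕ} (hM : 2 ≤ M) :
    (∑ l ∈ Finset.range M, Complex.cos (2 * Real.pi * l / M)) = 0 ∧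
    (∑ l ∈ Finset.range M, Complex.sin (2 * Real.pi * l / M)) = 0 := by
  have h := exp_sum_zero hM
  have key : ∀ l : ℕ, Complex.exp (2 * Real.pi * l / M * Complex.I)
      = ((Real.cos (2 * Real.pi * l / M) : ℝ) : ℂ)
        + ((Real.sin (2 * Real.pi * l / M) : ℝ) : ℂ) * Complex.I := by
    intro l
    rw [show (2 * (Real.pi : ℂ) * l / M) = ((2 * Real.pi * l / M : ℝ) : ℂ) by push_cast; ring]
    rw [Complex.exp_mul_I, ← Complex.ofReal_cos, ← Complex.ofReal_sin]
  simp_rw [key, Finset.sum_add_distrib, ← Finset.sum_mul, ← Complex.ofReal_sum] at h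
  have hC : (∑ l ∈ Finset.range M, Real.cos (2 * Real.pi * l / M)) = 0 := by
    have := congrArg Complex.re h
    simp only [Complex.add_re, Complex.ofReal_re, Complex.mul_re, Complex.I_re, Complex.I_im,
      Complex.ofReal_im, Complex.zero_re, mul_zero, mul_one, zero_mul, sub_zero, add_zero,
      zero_sub, zero_add, neg_zero] at this
    exact this
  have hS : (∑ l ∈ Finset.range M, Real.sin (2 * Real.pi * l / M)) = 0 := by
    have := congrArg Complex.im h
    simp only [Complex.add_im, Complex.ofReal_re, Complex.mul_im, Complex.I_re, Complex.I_im,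
      Complex.ofReal_im, Complex.zero_im, mul_zero, mul_one, zero_mul, sub_zero, add_zero,
      zero_sub, zero_add, neg_zero] at this
    exact this
  have e1 : ∀ l : ℕ, Complex.cos (2 * (Real.pi:ℂ) * l / M)
      = ((Real.cos (2 * Real.pi * l / M) : ℝ) : ℂ) := by
    intro l
    rw [show (2 * (Real.pi : ℂ) * l / M) = ((2 * Real.pi * l / M : ℝ) : ℂ) by push_cast; ring,
      Complex.ofReal_cos]
  have e2 : ∀ l : ℕ, Complex.sin (2 * (Real.pi:ℂ) * l / M)
      = ((Real.sin (2 * Real.pi * l / M) : ℝ) : ℂ) := by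
    intro l
    rw [show (2 * (Real.pi : ℂ) * l / M) = ((2 * Real.pi * l / M : ℝ) : ℂ) by push_cast; ring,
      Complex.ofReal_sin]
  constructor
  · simp_rw [e1, ← Complex.ofReal_sum, hC, Complex.ofReal_zero]
  · simp_rw [e2, ← Complex.ofReal_sum, hS, Complex.ofReal_zero]

lemma sum_R_zero {M : ℕ} (hM : 2 ≤ M) :
    ∑ l ∈ Finset.range M, R (2 * Real.pi * l / M) = 0 := by
  obtain ⟨hc, hs⟩ := cos_sin_sum hM
  ext i j
  fin_cases i <;> fin_cases j <;>
    simp [R, Matrix.sum_apply, hc, hs, Finset.sum_neg_distrib]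

lemma sum_R_neg_zero {M : ℕ} (hM : 2 ≤ M) :
    ∑ l ∈ Finset.range M, R (-(2 * Real.pi * l / M)) = 0 := by
  obtain ⟨hc, hs⟩ := cos_sin_sum hM
  ext i j
  fin_cases i <;> fin_cases j <;>
    simp [R, Matrix.sum_apply, hc, hs, Finset.sum_neg_distrib]

lemma abstract_sum {M : ℕ} (A B P : Matrix (Fin 2 × Fin 2) (Fin 2 × Fin 2) ℂ)
    (G : ℕ → Matrix (Fin 2 × Fin 2) (Fin 2 × Fin 2) ℂ)
    (hGsum : ∑ l ∈ Finset.range M, G l = 0)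
    (hGTsum : ∑ l ∈ Finset.range M, (G l)ᴴ = 0) :
    ∑ l ∈ Finset.range M, (A + B * G l) * P * (A + B * G l)ᴴ
      = M • (A * P * Aᴴ) + B * (∑ l ∈ Finset.range M, G l * P * (G l)ᴴ) * Bᴴ := by
  have hsplit : ∀ l : ℕ, (A + B * G l) * P * (A + B * G l)ᴴ
      = A * P * Aᴴ + (A * P * (G l)ᴴ) * Bᴴ + B * (G l * (P * Aᴴ))
        + B * (G l * P * (G l)ᴴ) * Bᴴ := by
    intro l
    simp only [Matrix.conjTranspose_add, Matrix.conjTranspose_mul, Matrix.add_mul, Matrix.mul_add]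
    noncomm_ring
  simp_rw [hsplit, Finset.sum_add_distrib]
  rw [Finset.sum_const, Finset.card_range]
  rw [← Finset.sum_mul, ← Finset.mul_sum, hGTsum, Matrix.mul_zero, Matrix.zero_mul]
  rw [← Finset.mul_sum, ← Finset.sum_mul, hGsum, Matrix.zero_mul, Matrix.mul_zero]
  rw [show (∑ l ∈ Finset.range M, B * (G l * P * (G l)ᴴ) * Bᴴ)
      = B * (∑ l ∈ Finset.range M, G l * P * (G l)ᴴ) * Bᴴ by
    rw [← Finset.sum_mul, ← Finset.mul_sum]]
  rw [add_zero, add_zero]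

lemma per_j {M : ℕ} (hM : 2 ≤ M) (θ : ℝ) (U V : Matrix (Fin 2) (Fin 2) ℂ)
    (hU : U * _root_.J = _root_.J * U) (hV : V * _root_.J = -(_root_.J * V)) :
    (1 / (M : ℂ)) • ∑ l ∈ Finset.range M,
        ((1 : Matrix (Fin 2) (Fin 2) ℂ) ⊗ₖ
            (F0 θ * R (-((l : ℝ) * Real.pi / (M : ℝ))) * (U + V) *
              R ((l : ℝ) * Real.pi / (M : ℝ)))) * P0 θ *
          ((1 : Matrix (Fin 2) (Fin 2) ℂ) ⊗ₖ
              (F0 θ * R (-((l : ℝ) * Real.pi / (M : ℝ))) * (U + V) *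
                R ((l : ℝ) * Real.pi / (M : ℝ))))ᴴ
      = ((1 : Matrix (Fin 2) (Fin 2) ℂ) ⊗ₖ F0 θ) *
          (((1 : Matrix (Fin 2) (Fin 2) ℂ) ⊗ₖ U) * P0 θ *
              ((1 : Matrix (Fin 2) (Fin 2) ℂ) ⊗ₖ U)ᴴ +
            ((1 : Matrix (Fin 2) (Fin 2) ℂ) ⊗ₖ V) * Phi θ M *
              ((1 : Matrix (Fin 2) (Fin 2) ℂ) ⊗ₖ V)ᴴ) *
          ((1 : Matrix (Fin 2) (Fin 2) ℂ) ⊗ₖ F0 θ)ᴴ := by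
  have hM0 : (M : ℂ) ≠ 0 := Nat.cast_ne_zero.mpr (by omega)
  -- the angle identity
  have hang : ∀ l : ℕ,
      F0 θ * R (-((l : ℝ) * Real.pi / (M : ℝ))) * (U + V) * R ((l : ℝ) * Real.pi / (M : ℝ))
        = F0 θ * U + (F0 θ * V) * R (2 * Real.pi * (l : ℝ) / (M : ℝ)) := by
    intro l
    set α : ℝ := (l : ℝ) * Real.pi / (M : ℝ) with hα
    have h1 : R (-α) * U * R α = U := by
      rw [mul_assoc, commute_R hU α, ← mul_assoc, R_mul_R, neg_add_cancel, R_zero, one_mul]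
    have h2 : R (-α) * V * R α = V * R (2 * Real.pi * (l : ℝ) / (M : ℝ)) := by
      rw [show R (-α) * V = V * R α from (anticommute_R hV α).symm, mul_assoc, R_mul_R,
        show α + α = 2 * Real.pi * (l : ℝ) / (M : ℝ) by rw [hα]; ring]
    calc F0 θ * R (-α) * (U + V) * R α
        = F0 θ * (R (-α) * U * R α) + F0 θ * (R (-α) * V * R α) := by
          simp only [Matrix.mul_add, Matrix.add_mul, mul_assoc]
      _ = F0 θ * U + (F0 θ * V) * R (2 * Real.pi * (l : ℝ) / (M : ℝ)) := by
          rw [h1, h2, ← mul_assoc]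
  have hsum : (∑ l ∈ Finset.range M,
      ((1 : Matrix (Fin 2) (Fin 2) ℂ) ⊗ₖ
          (F0 θ * R (-((l : ℝ) * Real.pi / (M : ℝ))) * (U + V) *
            R ((l : ℝ) * Real.pi / (M : ℝ)))) * P0 θ *
        ((1 : Matrix (Fin 2) (Fin 2) ℂ) ⊗ₖ
            (F0 θ * R (-((l : ℝ) * Real.pi / (M : ℝ))) * (U + V) *
              R ((l : ℝ) * Real.pi / (M : ℝ))))ᴴ)
      = ∑ l ∈ Finset.range M,
        (((1 : Matrix (Fin 2) (Fin 2) ℂ) ⊗ₖ (F0 θ * U)) +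
            ((1 : Matrix (Fin 2) (Fin 2) ℂ) ⊗ₖ (F0 θ * V)) *
              ((1 : Matrix (Fin 2) (Fin 2) ℂ) ⊗ₖ R (2 * Real.pi * (l : ℝ) / (M : ℝ)))) * P0 θ *
          (((1 : Matrix (Fin 2) (Fin 2) ℂ) ⊗ₖ (F0 θ * U)) +
            ((1 : Matrix (Fin 2) (Fin 2) ℂ) ⊗ₖ (F0 θ * V)) *
              ((1 : Matrix (Fin 2) (Fin 2) ℂ) ⊗ₖ R (2 * Real.pi * (l : ℝ) / (M : ℝ))))ᴴ := by
    refine Finset.sum_congr rfl fun l _ => ?_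
    rw [hang l, Matrix.kronecker_add, K_mul]
  rw [hsum]
  have hGsum : ∑ l ∈ Finset.range M,
      ((1 : Matrix (Fin 2) (Fin 2) ℂ) ⊗ₖ R (2 * Real.pi * (l : ℝ) / (M : ℝ))) = 0 := by
    rw [K_sum (fun l => R (2 * Real.pi * (l : ℝ) / (M : ℝ))), sum_R_zero hM,
      Matrix.kronecker_zero]
  have hGTsum : ∑ l ∈ Finset.range M,
      ((1 : Matrix (Fin 2) (Fin 2) ℂ) ⊗ₖ R (2 * Real.pi * (l : ℝ) / (M : ℝ)))ᴴ = 0 := by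
    have e : ∀ l : ℕ, ((1 : Matrix (Fin 2) (Fin 2) ℂ) ⊗ₖ R (2 * Real.pi * (l : ℝ) / (M : ℝ)))ᴴ
        = (1 : Matrix (Fin 2) (Fin 2) ℂ) ⊗ₖ R (-(2 * Real.pi * (l : ℝ) / (M : ℝ))) := by
      intro l; rw [K_conjT, R_conjT]
    simp_rw [e]
    rw [K_sum (fun l => R (-(2 * Real.pi * (l : ℝ) / (M : ℝ)))), sum_R_neg_zero hM,
      Matrix.kronecker_zero]
  rw [abstract_sum _ _ _ _ hGsum hGTsum]
  have hRHS : ((1 : Matrix (Fin 2) (Fin 2) ℂ) ⊗ₖ F0 θ) *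
        (((1 : Matrix (Fin 2) (Fin 2) ℂ) ⊗ₖ U) * P0 θ *
            ((1 : Matrix (Fin 2) (Fin 2) ℂ) ⊗ₖ U)ᴴ +
          ((1 : Matrix (Fin 2) (Fin 2) ℂ) ⊗ₖ V) * Phi θ M *
            ((1 : Matrix (Fin 2) (Fin 2) ℂ) ⊗ₖ V)ᴴ) *
        ((1 : Matrix (Fin 2) (Fin 2) ℂ) ⊗ₖ F0 θ)ᴴ
      = ((1 : Matrix (Fin 2) (Fin 2) ℂ) ⊗ₖ (F0 θ * U)) * P0 θ *
          ((1 : Matrix (Fin 2) (Fin 2) ℂ) ⊗ₖ (F0 θ * U))ᴴ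
        + (1 / (M : ℂ)) • (((1 : Matrix (Fin 2) (Fin 2) ℂ) ⊗ₖ (F0 θ * V)) *
            (∑ l ∈ Finset.range M,
              ((1 : Matrix (Fin 2) (Fin 2) ℂ) ⊗ₖ R (2 * Real.pi * (l : ℝ) / (M : ℝ))) * P0 θ *
                ((1 : Matrix (Fin 2) (Fin 2) ℂ) ⊗ₖ R (2 * Real.pi * (l : ℝ) / (M : ℝ)))ᴴ) *
            ((1 : Matrix (Fin 2) (Fin 2) ℂ) ⊗ₖ (F0 θ * V))ᴴ) := by
    rw [Matrix.mul_add, Matrix.add_mul]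
    congr 1
    · simp only [K_conjT, Matrix.conjTranspose_mul]
      simp only [← K_mul]
      noncomm_ring
    · rw [Phi]
      simp only [K_conjT, Matrix.conjTranspose_mul]
      simp only [← K_mul]
      simp only [Matrix.mul_smul, Matrix.smul_mul]
      congr 1
      noncomm_ring
  rw [hRHS, smul_add]
  congr 1
  rw [← Nat.cast_smul_eq_nsmul ℂ M, smul_smul, one_div, inv_mul_cancel₀ hM0, one_smul]

theorem symmetrized_filtered_density_operator
    {ι : Type*} [Fintype ι] (M : ℕ) (hM : 2 ≤ M) (θ : ℝ)
    (U V : ι → Matrix (Fin 2) (Fin 2) ℂ)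
    (hU : ∀ j, U j * _root_.J = _root_.J * U j) (hV : ∀ j, V j * _root_.J = -(_root_.J * V j)) :
    (1 / (M : ℂ)) • ∑ j : ι, ∑ l ∈ Finset.range M,
        ((1 : Matrix (Fin 2) (Fin 2) ℂ) ⊗ₖ
            (F0 θ * R (-((l : ℝ) * Real.pi / (M : ℝ))) * (U j + V j) *
              R ((l : ℝ) * Real.pi / (M : ℝ)))) * P0 θ *
          ((1 : Matrix (Fin 2) (Fin 2) ℂ) ⊗ₖ
              (F0 θ * R (-((l : ℝ) * Real.pi / (M : ℝ))) * (U j + V j) *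
                R ((l : ℝ) * Real.pi / (M : ℝ))))ᴴ
      = ((1 : Matrix (Fin 2) (Fin 2) ℂ) ⊗ₖ F0 θ) *
          (∑ j : ι,
            (((1 : Matrix (Fin 2) (Fin 2) ℂ) ⊗ₖ U j) * P0 θ *
                ((1 : Matrix (Fin 2) (Fin 2) ℂ) ⊗ₖ U j)ᴴ +
              ((1 : Matrix (Fin 2) (Fin 2) ℂ) ⊗ₖ V j) * Phi θ M *
                ((1 : Matrix (Fin 2) (Fin 2) ℂ) ⊗ₖ V j)ᴴ)) *
          ((1 : Matrix (Fin 2) (Fin 2) ℂ) ⊗ₖ F0 θ)ᴴ := by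
  rw [Finset.smul_sum, Finset.mul_sum, Finset.sum_mul]
  refine Finset.sum_congr rfl fun j _ => ?_
  exact per_j hM θ (U j) (V j) (hU j) (hV j)
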